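/- arXiv:1604.08655 — 4 statements merged into one kernel-verified Lean document; each statement's English description precedes it below -/
import Mathlib

section
/- Suppose the single five-term relation T_{1,0} T_{0,1} = T_{0,1} T_{1,1} T_{1,0} holds in End_K(V)[[u,v]]. Then for every integer k ≥ 1, the commutator identity [R(k,0), R(0,1)] = R(1,1) ∘ R(k-1,0) holds in End_K(V), where [A,B] = A∘B − B∘A. -/
open Classical

/-- The generating series `T_{m,n} = Σ_{k≥0} u^{mk} v^{nk} R(mk,nk)` as a formal power
series in two commuting variables `u = X 0`, `v = X 1` with coefficients in `End_K V`:
its coefficient at the monomial `u^a v^b` is `R(a,b)` if `(a,b) = (mk,nk)` for some `k`,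
and `0` otherwise (for coprime `(m,n)` this is exactly the displayed sum). -/
noncomputable def fiveTermT {K V : Type*} [Field K] [AddCommGroup V] [Module K V]
    (R : ℕ × ℕ → Module.End K V) (m n : ℕ) :
    MvPowerSeries (Fin 2) (Module.End K V) :=
  fun d => if ∃ k : ℕ, d 0 = m * k ∧ d 1 = n * k then R (d 0, d 1) else 0

private lemma s00 (n : ℕ) : (Finsupp.single (0 : Fin 2) n) 0 = n := by simp
private lemma s01 (n : ℕ) : (Finsupp.single (0 : Fin 2) n) 1 = 0 := by
  simp [Finsupp.single_apply]
private lemma s10 (n : ℕ) : (Finsupp.single (1 : Fin 2) n) 0 = 0 := by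
  simp [Finsupp.single_apply]
private lemma s11 (n : ℕ) : (Finsupp.single (1 : Fin 2) n) 1 = n := by simp

section Aux

variable {K V : Type*} [Field K] [AddCommGroup V] [Module K V]

private lemma fin2_ext {p q : Fin 2 →₀ ℕ} (h0 : p 0 = q 0) (h1 : p 1 = q 1) : p = q :=
  Finsupp.ext fun i => by fin_cases i <;> assumption

private lemma cT10 (R : ℕ × ℕ → Module.End K V) (p : Fin 2 →₀ ℕ) :
    fiveTermT R 1 0 p = if p 1 = 0 then R (p 0, p 1) else 0 := by
  show (if ∃ k, p 0 = 1 * k ∧ p 1 = 0 * k then R (p 0, p 1) else 0) = _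
  rcases eq_or_ne (p 1) 0 with h | h
  · rw [if_pos ⟨p 0, by simp, by simp [h]⟩, if_pos h]
  · rw [if_neg, if_neg h]
    rintro ⟨j, -, hj⟩
    simp at hj
    exact h hj

private lemma cT01 (R : ℕ × ℕ → Module.End K V) (p : Fin 2 →₀ ℕ) :
    fiveTermT R 0 1 p = if p 0 = 0 then R (p 0, p 1) else 0 := by
  show (if ∃ k, p 0 = 0 * k ∧ p 1 = 1 * k then R (p 0, p 1) else 0) = _
  rcases eq_or_ne (p 0) 0 with h | h
  · rw [if_pos ⟨p 1, by simp [h], by simp⟩, if_pos h]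
  · rw [if_neg, if_neg h]
    rintro ⟨j, hj, -⟩
    simp at hj
    exact h hj

private lemma cT11 (R : ℕ × ℕ → Module.End K V) (p : Fin 2 →₀ ℕ) :
    fiveTermT R 1 1 p = if p 1 = p 0 then R (p 0, p 1) else 0 := by
  show (if ∃ k, p 0 = 1 * k ∧ p 1 = 1 * k then R (p 0, p 1) else 0) = _
  rcases eq_or_ne (p 1) (p 0) with h | h
  · rw [if_pos ⟨p 0, by simp, by simp [h]⟩, if_pos h]
  · rw [if_neg, if_neg h]
    rintro ⟨j, hj, hj'⟩
    simp at hj hj'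
    exact h (hj' ▸ hj ▸ rfl)

private lemma capp (φ : MvPowerSeries (Fin 2) (Module.End K V)) (d : Fin 2 →₀ ℕ) :
    MvPowerSeries.coeff (R := Module.End K V) d φ = φ d := rfl

end Aux

theorem stmt_0 {K V : Type*} [Field K] [AddCommGroup V] [Module K V]
    (R : ℕ × ℕ → Module.End K V) (hR : R (0, 0) = LinearMap.id)
    (h5 : fiveTermT R 1 0 * fiveTermT R 0 1
        = fiveTermT R 0 1 * fiveTermT R 1 1 * fiveTermT R 1 0) :
    ∀ k : ℕ, 1 ≤ k →
      R (k, 0) ∘ₗ R (0, 1) - R (0, 1) ∘ₗ R (k, 0)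
        = R (1, 1) ∘ₗ R (k - 1, 0) := by
  intro k hk
  have hR1 : R (0, 0) = (1 : Module.End K V) := hR
  obtain ⟨m, rfl⟩ : ∃ m, k = m + 1 := ⟨k - 1, (Nat.succ_pred_eq_of_pos hk).symm⟩
  simp only [Nat.add_sub_cancel]
  set d : Fin 2 →₀ ℕ := Finsupp.single 0 (m + 1) + Finsupp.single 1 1 with hd
  have hd0 : d 0 = m + 1 := by simp [hd, s00, s10, Finsupp.add_apply]
  have hd1 : d 1 = 1 := by simp [hd, s01, s11, Finsupp.add_apply]
  have h := congrArg (MvPowerSeries.coeff (R := Module.End K V) d) h5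
  rw [MvPowerSeries.coeff_mul, MvPowerSeries.coeff_mul] at h
  -- LHS
  have hL : ∑ p ∈ Finset.HasAntidiagonal.antidiagonal d,
      MvPowerSeries.coeff (R := Module.End K V) p.1 (fiveTermT R 1 0) *
        MvPowerSeries.coeff (R := Module.End K V) p.2 (fiveTermT R 0 1)
      = R (m + 1, 0) * R (0, 1) := by
    rw [Finset.sum_eq_single_of_mem (Finsupp.single 0 (m + 1), Finsupp.single 1 1)
      (Finset.HasAntidiagonal.mem_antidiagonal.mpr hd.symm)]
    · rw [capp, capp, cT10, cT01, if_pos (s01 (m + 1)), if_pos (s10 1), s00, s01, s10, s11]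
    · rintro ⟨p, q⟩ hb hne
      rw [Finset.HasAntidiagonal.mem_antidiagonal] at hb
      have h0 : p 0 + q 0 = m + 1 := by
        have := DFunLike.congr_fun hb 0; simpa [hd0] using this
      have h1 : p 1 + q 1 = 1 := by
        have := DFunLike.congr_fun hb 1; simpa [hd1] using this
      rw [capp, capp, cT10, cT01]
      rcases eq_or_ne (p 1) 0 with hp | hp
      · rcases eq_or_ne (q 0) 0 with hq | hq
        · have hp' : p = Finsupp.single 0 (m + 1) := fin2_ext (by rw [s00]; omega) (by rw [s01]; omega)
          have hq' : q = Finsupp.single 1 1 := fin2_ext (by rw [s10]; omega) (by rw [s11]; omega)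
          exact absurd (Prod.ext hp' hq') hne
        · rw [if_neg hq, mul_zero]
      · rw [if_neg hp, zero_mul]
  -- coefficient of T01 * T11 at single 1 1
  have he1 : MvPowerSeries.coeff (R := Module.End K V) (Finsupp.single 1 1)
      (fiveTermT R 0 1 * fiveTermT R 1 1) = R (0, 1) := by
    rw [MvPowerSeries.coeff_mul,
      Finset.sum_eq_single_of_mem ((Finsupp.single 1 1 : Fin 2 →₀ ℕ), (0 : Fin 2 →₀ ℕ))
      (Finset.HasAntidiagonal.mem_antidiagonal.mpr (by simp))]
    · rw [capp, capp, cT01, cT11, if_pos (s10 1), if_pos (show (0 : Fin 2 →₀ ℕ) 1 = (0 : Fin 2 →₀ ℕ) 0 from rfl), s10, s11]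
      show R (0, 1) * R (0, 0) = R (0, 1)
      rw [hR1, mul_one]
    · rintro ⟨p, q⟩ hb hne
      rw [Finset.HasAntidiagonal.mem_antidiagonal] at hb
      have h0 : p 0 + q 0 = 0 := by
        have := DFunLike.congr_fun hb 0; simpa [s10] using this
      have h1 : p 1 + q 1 = 1 := by
        have := DFunLike.congr_fun hb 1; simpa [s11] using this
      rw [capp, capp, cT01, cT11]
      rcases eq_or_ne (q 1) 0 with hq | hq
      · have hp' : p = Finsupp.single 1 1 := fin2_ext (by rw [s10]; omega) (by rw [s11]; omega)
        have hq' : q = 0 := fin2_ext (by show q 0 = (0 : Fin 2 →₀ ℕ) 0; show q 0 = 0; omega) (by show q 1 = (0 : Fin 2 →₀ ℕ) 1; show q 1 = 0; omega)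
        exact absurd (Prod.ext hp' hq') hne
      · rw [if_neg (show ¬ q 1 = q 0 by omega), mul_zero]
  -- coefficient of T01 * T11 at single 0 1 + single 1 1
  have he2 : MvPowerSeries.coeff (R := Module.End K V)
      (Finsupp.single 0 1 + Finsupp.single 1 1)
      (fiveTermT R 0 1 * fiveTermT R 1 1) = R (1, 1) := by
    have e20 : (Finsupp.single 0 1 + Finsupp.single 1 1 : Fin 2 →₀ ℕ) 0 = 1 := by
      rw [Finsupp.add_apply, s00, s10]
    have e21 : (Finsupp.single 0 1 + Finsupp.single 1 1 : Fin 2 →₀ ℕ) 1 = 1 := by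
      rw [Finsupp.add_apply, s01, s11]
    rw [MvPowerSeries.coeff_mul,
      Finset.sum_eq_single_of_mem
        ((0 : Fin 2 →₀ ℕ), (Finsupp.single 0 1 + Finsupp.single 1 1 : Fin 2 →₀ ℕ))
      (Finset.HasAntidiagonal.mem_antidiagonal.mpr (by simp))]
    · simp only [capp, cT01, cT11, Finsupp.coe_zero, Pi.zero_apply, e20, e21]
      show R (0, 0) * R (1, 1) = R (1, 1)
      rw [hR1, one_mul]
    · rintro ⟨p, q⟩ hb hne
      rw [Finset.HasAntidiagonal.mem_antidiagonal] at hb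
      have h0 : p 0 + q 0 = 1 := by
        have := DFunLike.congr_fun hb 0; simpa [e20] using this
      have h1 : p 1 + q 1 = 1 := by
        have := DFunLike.congr_fun hb 1; simpa [e21] using this
      rw [capp, capp, cT01, cT11]
      rcases eq_or_ne (p 0) 0 with hp | hp
      · rcases eq_or_ne (q 1) (q 0) with hq | hq
        · have hp' : p = 0 := fin2_ext (by show p 0 = (0 : Fin 2 →₀ ℕ) 0; show p 0 = 0; omega) (by show p 1 = (0 : Fin 2 →₀ ℕ) 1; show p 1 = 0; omega)
          have hq' : q = Finsupp.single 0 1 + Finsupp.single 1 1 := fin2_ext (by rw [e20]; omega) (by rw [e21]; omega)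
          exact absurd (Prod.ext hp' hq') hne
        · rw [if_neg hq, mul_zero]
      · rw [if_neg hp, zero_mul]
  -- T01*T11 vanishes at e with e 1 = 1, e 0 ≥ 2
  have hzero : ∀ e : Fin 2 →₀ ℕ, e 1 = 1 → 2 ≤ e 0 →
      MvPowerSeries.coeff (R := Module.End K V) e (fiveTermT R 0 1 * fiveTermT R 1 1) = 0 := by
    intro e he1' he0'
    rw [MvPowerSeries.coeff_mul]
    apply Finset.sum_eq_zero
    rintro ⟨p, q⟩ hb
    rw [Finset.HasAntidiagonal.mem_antidiagonal] at hb
    have h0 : p 0 + q 0 = e 0 := by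
      have := DFunLike.congr_fun hb 0; simpa using this
    have h1 : p 1 + q 1 = 1 := by
      have := DFunLike.congr_fun hb 1; simpa [he1'] using this
    rw [capp, capp, cT01, cT11]
    rcases eq_or_ne (p 0) 0 with hp | hp
    · rw [if_neg (show ¬ q 1 = q 0 by omega), mul_zero]
    · rw [if_neg hp, zero_mul]
  -- RHS
  have hRs : ∑ p ∈ Finset.HasAntidiagonal.antidiagonal d,
      MvPowerSeries.coeff (R := Module.End K V) p.1 (fiveTermT R 0 1 * fiveTermT R 1 1) *
        MvPowerSeries.coeff (R := Module.End K V) p.2 (fiveTermT R 1 0)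
      = R (0, 1) * R (m + 1, 0) + R (1, 1) * R (m, 0) := by
    set a : (Fin 2 →₀ ℕ) × (Fin 2 →₀ ℕ) :=
      (Finsupp.single 1 1, Finsupp.single 0 (m + 1)) with ha
    set b : (Fin 2 →₀ ℕ) × (Fin 2 →₀ ℕ) :=
      (Finsupp.single 0 1 + Finsupp.single 1 1, Finsupp.single 0 m) with hb
    set F : (Fin 2 →₀ ℕ) × (Fin 2 →₀ ℕ) → Module.End K V := fun p =>
      MvPowerSeries.coeff (R := Module.End K V) p.1 (fiveTermT R 0 1 * fiveTermT R 1 1) *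
        MvPowerSeries.coeff (R := Module.End K V) p.2 (fiveTermT R 1 0) with hF
    have hamem : a ∈ Finset.HasAntidiagonal.antidiagonal d :=
      Finset.HasAntidiagonal.mem_antidiagonal.mpr (fin2_ext
        (by rw [Finsupp.add_apply, s10, s00, hd0]; omega)
        (by rw [Finsupp.add_apply, s11, s01, hd1]))
    have hbmem : b ∈ Finset.HasAntidiagonal.antidiagonal d :=
      Finset.HasAntidiagonal.mem_antidiagonal.mpr (fin2_ext
        (by rw [Finsupp.add_apply, Finsupp.add_apply, s00, s10, s00, hd0]; omega)
        (by rw [Finsupp.add_apply, Finsupp.add_apply, s01, s11, s01, hd1]))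
    have hab : b ≠ a := by
      intro hcontra
      have := congrArg (fun x => x.1 0) hcontra
      simp only [ha, hb, Finsupp.add_apply, s10, s00] at this
      omega
    have hFa : F a = R (0, 1) * R (m + 1, 0) := by
      rw [hF, ha]
      simp only [he1, capp, cT10, s00, s01, if_pos (s01 (m + 1)), eq_self_iff_true, if_true]
    have hFb : F b = R (1, 1) * R (m, 0) := by
      rw [hF, hb]
      simp only [he2, capp, cT10, s00, s01, if_pos (s01 m), eq_self_iff_true, if_true]
    have hrest : ∑ p ∈ (Finset.HasAntidiagonal.antidiagonal d).erase a, F p = F b := by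
      apply Finset.sum_eq_single_of_mem b (Finset.mem_erase.mpr ⟨hab, hbmem⟩)
      rintro ⟨e, f⟩ hmem hne2
      obtain ⟨hne1, hb'⟩ := Finset.mem_erase.mp hmem
      rw [Finset.HasAntidiagonal.mem_antidiagonal] at hb'
      have h0 : e 0 + f 0 = m + 1 := by
        have := DFunLike.congr_fun hb' 0; simpa [hd0] using this
      have h1 : e 1 + f 1 = 1 := by
        have := DFunLike.congr_fun hb' 1; simpa [hd1] using this
      rcases eq_or_ne (f 1) 0 with hf | hf
      · have he : e 1 = 1 := by omega
        rcases Nat.lt_or_ge (e 0) 2 with hlt | hge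
        · interval_cases h' : e 0
          · have he' : e = Finsupp.single 1 1 := fin2_ext (by rw [s10]; omega) (by rw [s11]; omega)
            have hf' : f = Finsupp.single 0 (m + 1) := fin2_ext (by rw [s00]; omega) (by rw [s01]; omega)
            exact absurd (Prod.ext he' hf') hne1
          · have he' : e = Finsupp.single 0 1 + Finsupp.single 1 1 := fin2_ext
              (by rw [Finsupp.add_apply, s00, s10]; omega)
              (by rw [Finsupp.add_apply, s01, s11]; omega)
            have hf' : f = Finsupp.single 0 m := fin2_ext (by rw [s00]; omega) (by rw [s01]; omega)
            exact absurd (Prod.ext he' hf') hne2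
        · show MvPowerSeries.coeff (R := Module.End K V) e (fiveTermT R 0 1 * fiveTermT R 1 1) *
            MvPowerSeries.coeff (R := Module.End K V) f (fiveTermT R 1 0) = 0
          rw [hzero e he hge, zero_mul]
      · show MvPowerSeries.coeff (R := Module.End K V) e (fiveTermT R 0 1 * fiveTermT R 1 1) *
          MvPowerSeries.coeff (R := Module.End K V) f (fiveTermT R 1 0) = 0
        rw [capp (fiveTermT R 1 0) f, cT10, if_neg hf, mul_zero]
    calc ∑ p ∈ Finset.HasAntidiagonal.antidiagonal d, F p
        = F a + ∑ p ∈ (Finset.HasAntidiagonal.antidiagonal d).erase a, F p :=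
          (Finset.add_sum_erase _ F hamem).symm
      _ = R (0, 1) * R (m + 1, 0) + R (1, 1) * R (m, 0) := by rw [hFa, hrest, hFb]
  rw [hL, hRs] at h
  have key : R (m + 1, 0) * R (0, 1) - R (0, 1) * R (m + 1, 0) = R (1, 1) * R (m, 0) := by
    rw [h, add_sub_cancel_left]
  calc R (m + 1, 0) ∘ₗ R (0, 1) - R (0, 1) ∘ₗ R (m + 1, 0)
      = R (m + 1, 0) * R (0, 1) - R (0, 1) * R (m + 1, 0) := rfl
    _ = R (1, 1) * R (m, 0) := key
    _ = R (1, 1) ∘ₗ R (m, 0) := rfl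
end

section
/- Let m, n, m', n' be natural numbers with m·n' − m'·n = 1. The five-term relation T_{m,n} T_{m',n'} = T_{m',n'} T_{m+m',n+n'} T_{m,n} holds in End_K(V)[[u,v]] if and only if for all natural numbers a, b one has R(am,an) ∘ R(bm',bn') = Σ_{e=0}^{min(a,b)} R((b-e)m',(b-e)n') ∘ R(e(m+m'),e(n+n')) ∘ R((a-e)m,(a-e)n) in End_K(V). -/
open Classical

noncomputable def E2 (x y : ℕ) : Fin 2 →₀ ℕ :=
  Finsupp.single 0 x + Finsupp.single 1 y

@[simp] lemma E2_apply_zero (x y : ℕ) : E2 x y 0 = x := by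
  simp [E2, Finsupp.single_apply]

@[simp] lemma E2_apply_one (x y : ℕ) : E2 x y 1 = y := by
  simp [E2, Finsupp.single_apply]

lemma E2_eq_self (d : Fin 2 →₀ ℕ) : E2 (d 0) (d 1) = d := by
  ext i; fin_cases i <;> simp

lemma E2_add (x y x' y' : ℕ) : E2 x y + E2 x' y' = E2 (x + x') (y + y') := by
  ext i; fin_cases i <;> simp

lemma uniq2 {p1 q1 p2 q2 : ℕ} (h : p1 * q2 = p2 * q1 + 1) {a b a' b' : ℕ}
    (h1 : a * p1 + b * p2 = a' * p1 + b' * p2)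
    (h2 : a * q1 + b * q2 = a' * q1 + b' * q2) : a = a' ∧ b = b' := by
  have h' : (p1:ℤ) * q2 = p2 * q1 + 1 := by exact_mod_cast h
  have h1' : (a:ℤ) * p1 + b * p2 = a' * p1 + b' * p2 := by exact_mod_cast h1
  have h2' : (a:ℤ) * q1 + b * q2 = a' * q1 + b' * q2 := by exact_mod_cast h2
  have ha : (a:ℤ) = a' := by
    linear_combination q2 * h1' - p2 * h2' + ((a':ℤ) - a) * h'
  have hb : (b:ℤ) = b' := by
    linear_combination p1 * h2' - q1 * h1' + ((b':ℤ) - b) * h'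
  exact ⟨by exact_mod_cast ha, by exact_mod_cast hb⟩

section
variable {K V : Type*} [Field K] [AddCommGroup V] [Module K V]
  (R : ℕ × ℕ → Module.End K V)

lemma coeff_fiveTermT (m n : ℕ) (d : Fin 2 →₀ ℕ) :
    MvPowerSeries.coeff d (fiveTermT R m n)
      = if ∃ k : ℕ, d 0 = m * k ∧ d 1 = n * k then R (d 0, d 1) else 0 := rfl

lemma coeff_mul_rep (p1 q1 p2 q2 : ℕ)
    (hinj : ∀ a b a' b' : ℕ, a * p1 + b * p2 = a' * p1 + b' * p2 →
      a * q1 + b * q2 = a' * q1 + b' * q2 → a = a' ∧ b = b')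
    (a b : ℕ) :
    MvPowerSeries.coeff (E2 (a * p1 + b * p2) (a * q1 + b * q2))
        (fiveTermT R p1 q1 * fiveTermT R p2 q2)
      = R (a * p1, a * q1) * R (b * p2, b * q2) := by
  rw [MvPowerSeries.coeff_mul]
  rw [Finset.sum_eq_single_of_mem (E2 (a * p1) (a * q1), E2 (b * p2) (b * q2))
    (Finset.HasAntidiagonal.mem_antidiagonal.mpr (by rw [E2_add]))]
  · rw [coeff_fiveTermT, coeff_fiveTermT]
    rw [if_pos ⟨a, by simp [mul_comm]⟩, if_pos ⟨b, by simp [mul_comm]⟩]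
    simp
  · rintro ⟨p, q⟩ hmem hne
    rw [coeff_fiveTermT, coeff_fiveTermT]
    by_cases hc1 : ∃ k : ℕ, p 0 = p1 * k ∧ p 1 = q1 * k
    · by_cases hc2 : ∃ k : ℕ, q 0 = p2 * k ∧ q 1 = q2 * k
      · exfalso
        obtain ⟨k, hk0, hk1⟩ := hc1
        obtain ⟨l, hl0, hl1⟩ := hc2
        have hpq := Finset.HasAntidiagonal.mem_antidiagonal.mp hmem
        have h0 : p 0 + q 0 = a * p1 + b * p2 := by
          rw [← Finsupp.add_apply, hpq]; simp
        have h1 : p 1 + q 1 = a * q1 + b * q2 := by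
          rw [← Finsupp.add_apply, hpq]; simp
        rw [hk0, hl0] at h0
        rw [hk1, hl1] at h1
        obtain ⟨hka, hlb⟩ := hinj k l a b (by linarith [h0, mul_comm p1 k, mul_comm p2 l])
          (by linarith [h1, mul_comm q1 k, mul_comm q2 l])
        subst hka; subst hlb
        apply hne
        have hp : p = E2 (k * p1) (k * q1) := by
          rw [← E2_eq_self p, hk0, hk1, mul_comm p1 k, mul_comm q1 k]
        have hq : q = E2 (l * p2) (l * q2) := by
          rw [← E2_eq_self q, hl0, hl1, mul_comm p2 l, mul_comm q2 l]
        rw [hp, hq]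
      · rw [if_neg hc2, mul_zero]
    · rw [if_neg hc1, zero_mul]

lemma coeff_mul_nonrep (p1 q1 p2 q2 : ℕ) (d : Fin 2 →₀ ℕ)
    (h : ¬ ∃ a b : ℕ, d 0 = a * p1 + b * p2 ∧ d 1 = a * q1 + b * q2) :
    MvPowerSeries.coeff d (fiveTermT R p1 q1 * fiveTermT R p2 q2) = 0 := by
  rw [MvPowerSeries.coeff_mul]
  apply Finset.sum_eq_zero
  rintro ⟨p, q⟩ hmem
  rw [coeff_fiveTermT, coeff_fiveTermT]
  by_cases hc1 : ∃ k : ℕ, p 0 = p1 * k ∧ p 1 = q1 * k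
  · by_cases hc2 : ∃ k : ℕ, q 0 = p2 * k ∧ q 1 = q2 * k
    · exfalso
      obtain ⟨k, hk0, hk1⟩ := hc1
      obtain ⟨l, hl0, hl1⟩ := hc2
      have hpq := Finset.HasAntidiagonal.mem_antidiagonal.mp hmem
      exact h ⟨k, l, by rw [← hpq]; simp [Finsupp.add_apply, hk0, hl0, mul_comm],
        by rw [← hpq]; simp [Finsupp.add_apply, hk1, hl1, mul_comm]⟩
    · rw [if_neg hc2, mul_zero]
  · rw [if_neg hc1, zero_mul]

end

section Main
variable {K V : Type*} [Field K] [AddCommGroup V] [Module K V]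
  (R : ℕ × ℕ → Module.End K V) (m n m' n' : ℕ)

lemma coeff_RHS_rep (hm : m * n' = m' * n + 1) (a b : ℕ) :
    MvPowerSeries.coeff (E2 (a * m + b * m') (a * n + b * n'))
        (fiveTermT R m' n' * fiveTermT R (m + m') (n + n') * fiveTermT R m n)
      = ∑ e ∈ Finset.range (min a b + 1),
          R ((b - e) * m', (b - e) * n') * R (e * (m + m'), e * (n + n'))
            * R ((a - e) * m, (a - e) * n) := by
  have hm0 : 0 < m := by
    rcases Nat.eq_zero_or_pos m with h | h
    · subst h; simp at hm
    · exact h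
  have h23 : (m + m') * n' = m' * (n + n') + 1 := by
    rw [add_mul, mul_add, hm]; ring
  have hinj23 : ∀ x y x' y' : ℕ, x * m' + y * (m + m') = x' * m' + y' * (m + m') →
      x * n' + y * (n + n') = x' * n' + y' * (n + n') → x = x' ∧ y = y' := by
    intro x y x' y' h1 h2
    have := uniq2 h23 (a := y) (b := x) (a' := y') (b' := x')
      (by linarith) (by linarith)
    exact ⟨this.2, this.1⟩
  rw [MvPowerSeries.coeff_mul]
  set g : ℕ → (Fin 2 →₀ ℕ) × (Fin 2 →₀ ℕ) := fun e =>
    (E2 ((b - e) * m' + e * (m + m')) ((b - e) * n' + e * (n + n')),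
      E2 ((a - e) * m) ((a - e) * n)) with hg
  have hsub : (Finset.range (min a b + 1)).image g ⊆
      Finset.HasAntidiagonal.antidiagonal (E2 (a * m + b * m') (a * n + b * n')) := by
    intro x hx
    obtain ⟨e, he, rfl⟩ := Finset.mem_image.mp hx
    have hea : e ≤ a := by have := Finset.mem_range.mp he; omega
    have heb : e ≤ b := by have := Finset.mem_range.mp he; omega
    obtain ⟨a0, rfl⟩ := Nat.exists_eq_add_of_le hea
    obtain ⟨b0, rfl⟩ := Nat.exists_eq_add_of_le heb
    rw [Finset.HasAntidiagonal.mem_antidiagonal]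
    show E2 _ _ + E2 _ _ = _
    rw [E2_add]
    congr 1 <;> (simp only [Nat.add_sub_cancel_left]; ring)
  have hzero : ∀ x ∈ Finset.HasAntidiagonal.antidiagonal (E2 (a * m + b * m') (a * n + b * n')),
      x ∉ (Finset.range (min a b + 1)).image g →
      MvPowerSeries.coeff x.1
          (fiveTermT R m' n' * fiveTermT R (m + m') (n + n'))
        * MvPowerSeries.coeff x.2 (fiveTermT R m n) = 0 := by
    rintro ⟨p, q⟩ hmem hnotim
    by_cases hrepP : ∃ x y : ℕ, p 0 = x * m' + y * (m + m') ∧ p 1 = x * n' + y * (n + n')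
    · obtain ⟨x, y, hx0, hx1⟩ := hrepP
      by_cases hcq : ∃ k : ℕ, q 0 = m * k ∧ q 1 = n * k
      · exfalso
        obtain ⟨k, hk0, hk1⟩ := hcq
        have hpq := Finset.HasAntidiagonal.mem_antidiagonal.mp hmem
        have h0 : p 0 + q 0 = a * m + b * m' := by
          rw [← Finsupp.add_apply, hpq]; simp
        have h1 : p 1 + q 1 = a * n + b * n' := by
          rw [← Finsupp.add_apply, hpq]; simp
        rw [hx0, hk0] at h0
        rw [hx1, hk1] at h1
        have huv := uniq2 hm (a := k + y) (b := x + y) (a' := a) (b' := b)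
          (by linarith [mul_comm m k]) (by linarith [mul_comm n k])
        apply hnotim
        apply Finset.mem_image.mpr
        refine ⟨y, Finset.mem_range.mpr (by omega), ?_⟩
        have hx' : x = b - y := by omega
        have hk' : k = a - y := by omega
        have hp : p = E2 ((b - y) * m' + y * (m + m')) ((b - y) * n' + y * (n + n')) := by
          rw [← E2_eq_self p, hx0, hx1, hx']
        have hq : q = E2 ((a - y) * m) ((a - y) * n) := by
          rw [← E2_eq_self q, hk0, hk1, hk', mul_comm m (a - y), mul_comm n (a - y)]
        rw [hg]
        dsimp only
        rw [← hp, ← hq]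
      · rw [coeff_fiveTermT, if_neg hcq, mul_zero]
    · rw [coeff_mul_nonrep R m' n' (m + m') (n + n') p hrepP, zero_mul]
  rw [← Finset.sum_subset hsub hzero]
  rw [Finset.sum_image]
  · apply Finset.sum_congr rfl
    intro e he
    have hea : e ≤ a := by have := Finset.mem_range.mp he; omega
    rw [hg]
    dsimp only
    rw [coeff_mul_rep R m' n' (m + m') (n + n') hinj23 (b - e) e]
    rw [coeff_fiveTermT, if_pos ⟨a - e, by simp [mul_comm]⟩]
    simp
  · intro x hx y hy hxy
    have hxa : x ≤ a := by have := Finset.mem_range.mp hx; omega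
    have hya : y ≤ a := by have := Finset.mem_range.mp hy; omega
    have := congrArg (fun z => z.2 0) hxy
    simp only [hg, E2_apply_zero] at this
    have := Nat.eq_of_mul_eq_mul_right hm0 this
    omega

lemma coeff_RHS_nonrep (d : Fin 2 →₀ ℕ)
    (h : ¬ ∃ a b : ℕ, d 0 = a * m + b * m' ∧ d 1 = a * n + b * n') :
    MvPowerSeries.coeff d
      (fiveTermT R m' n' * fiveTermT R (m + m') (n + n') * fiveTermT R m n) = 0 := by
  rw [MvPowerSeries.coeff_mul]
  apply Finset.sum_eq_zero
  rintro ⟨p, q⟩ hmem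
  by_cases hrepP : ∃ x y : ℕ, p 0 = x * m' + y * (m + m') ∧ p 1 = x * n' + y * (n + n')
  · obtain ⟨x, y, hx0, hx1⟩ := hrepP
    by_cases hcq : ∃ k : ℕ, q 0 = m * k ∧ q 1 = n * k
    · exfalso
      obtain ⟨k, hk0, hk1⟩ := hcq
      have hpq := Finset.HasAntidiagonal.mem_antidiagonal.mp hmem
      refine h ⟨k + y, x + y, ?_, ?_⟩
      · rw [← hpq]; simp only [Finsupp.add_apply, hx0, hk0]; ring
      · rw [← hpq]; simp only [Finsupp.add_apply, hx1, hk1]; ring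
    · rw [coeff_fiveTermT, if_neg hcq, mul_zero]
  · rw [coeff_mul_nonrep R m' n' (m + m') (n + n') p hrepP, zero_mul]

end Main

theorem stmt_4 {K V : Type*} [Field K] [AddCommGroup V] [Module K V]
    (R : ℕ × ℕ → Module.End K V) (hR : R (0, 0) = LinearMap.id)
    (m n m' n' : ℕ) (hdet : m * n' - m' * n = 1) :
    (fiveTermT R m n * fiveTermT R m' n'
        = fiveTermT R m' n' * fiveTermT R (m + m') (n + n') * fiveTermT R m n)
      ↔ ∀ a b : ℕ,
          R (a * m, a * n) ∘ₗ R (b * m', b * n')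
            = ∑ e ∈ Finset.range (min a b + 1),
                R ((b - e) * m', (b - e) * n')
                  ∘ₗ R (e * (m + m'), e * (n + n'))
                  ∘ₗ R ((a - e) * m, (a - e) * n) := by
  have hm : m * n' = m' * n + 1 := by
    set x := m * n' with hx
    set y := m' * n with hy
    omega
  have hinj12 : ∀ a b a' b' : ℕ, a * m + b * m' = a' * m + b' * m' →
      a * n + b * n' = a' * n + b' * n' → a = a' ∧ b = b' :=
    fun a b a' b' h1 h2 => uniq2 hm h1 h2
  constructor
  · intro hEq a b
    have h := congrArg
      (MvPowerSeries.coeff (E2 (a * m + b * m') (a * n + b * n'))) hEq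
    rw [coeff_mul_rep R m n m' n' hinj12 a b, coeff_RHS_rep R m n m' n' hm a b] at h
    simpa [Module.End.mul_eq_comp, LinearMap.comp_assoc] using h
  · intro H
    apply MvPowerSeries.ext
    intro d
    by_cases hrep : ∃ a b : ℕ, d 0 = a * m + b * m' ∧ d 1 = a * n + b * n'
    · obtain ⟨a, b, h0, h1⟩ := hrep
      have hd : d = E2 (a * m + b * m') (a * n + b * n') := by
        rw [← h0, ← h1, E2_eq_self]
      rw [hd, coeff_mul_rep R m n m' n' hinj12 a b, coeff_RHS_rep R m n m' n' hm a b]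
      simpa [Module.End.mul_eq_comp, LinearMap.comp_assoc] using H a b
    · rw [coeff_mul_nonrep R m n m' n' d hrep, coeff_RHS_nonrep R m n m' n' d hrep]
end

section
/- Let m, n, m', n' be natural numbers with m·n' − m'·n = 1, and suppose the five-term relation T_{m,n} T_{m',n'} = T_{m',n'} T_{m+m',n+n'} T_{m,n} holds in End_K(V)[[u,v]]. Then for every integer a ≥ 1, the commutator identity [R(am,an), R(m',n')] = R(m+m',n+n') ∘ R((a-1)m,(a-1)n) holds in End_K(V), where [A,B] = A∘B − B∘A. -/
open Classical

noncomputable def fT2 (x y : ℕ) : Fin 2 →₀ ℕ := Finsupp.single 0 x + Finsupp.single 1 y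

lemma fT2_0 (x y : ℕ) : fT2 x y 0 = x := by simp [fT2]
lemma fT2_1 (x y : ℕ) : fT2 x y 1 = y := by simp [fT2]

lemma fT2_ext {f : Fin 2 →₀ ℕ} {x y : ℕ} (h0 : f 0 = x) (h1 : f 1 = y) : f = fT2 x y := by
  ext i
  fin_cases i
  · simpa [fT2] using h0
  · simpa [fT2] using h1

lemma fT2_add (x y x' y' : ℕ) : fT2 x y + fT2 x' y' = fT2 (x + x') (y + y') := by
  refine fT2_ext ?_ ?_ <;> simp [Finsupp.add_apply, fT2_0, fT2_1]

lemma coeffT {K V : Type*} [Field K] [AddCommGroup V] [Module K V]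
    (R : ℕ × ℕ → Module.End K V) (m n : ℕ) (p : Fin 2 →₀ ℕ) :
    MvPowerSeries.coeff (R := Module.End K V) p (fiveTermT R m n)
      = if ∃ k : ℕ, p 0 = m * k ∧ p 1 = n * k then R (p 0, p 1) else 0 := rfl

lemma unique_rep (m n m' n' : ℕ) (hd : m * n' = m' * n + 1)
    (a k j : ℕ) (e1 : m * k + m' * j = a * m + m') (e2 : n * k + n' * j = a * n + n') :
    k = a ∧ j = 1 := by
  have hdZ : (m:ℤ) * n' - m' * n = 1 := by
    have : (m:ℤ) * n' = (m':ℤ) * n + 1 := by exact_mod_cast hd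
    linarith
  have e1Z : (m:ℤ) * k + m' * j = a * m + m' := by exact_mod_cast e1
  have e2Z : (n:ℤ) * k + n' * j = a * n + n' := by exact_mod_cast e2
  have hk : (k:ℤ) = a := by linear_combination (n':ℤ) * e1Z - (m':ℤ) * e2Z + ((a:ℤ) - k) * hdZ
  have hj : (j:ℤ) = 1 := by linear_combination (m:ℤ) * e2Z - (n:ℤ) * e1Z + (1 - (j:ℤ)) * hdZ
  exact ⟨by exact_mod_cast hk, by exact_mod_cast hj⟩

theorem stmt_5 {K V : Type*} [Field K] [AddCommGroup V] [Module K V]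
    (R : ℕ × ℕ → Module.End K V) (hR : R (0, 0) = LinearMap.id)
    (m n m' n' : ℕ) (hdet : m * n' - m' * n = 1)
    (h5 : fiveTermT R m n * fiveTermT R m' n'
        = fiveTermT R m' n' * fiveTermT R (m + m') (n + n') * fiveTermT R m n) :
    ∀ a : ℕ, 1 ≤ a →
      R (a * m, a * n) ∘ₗ R (m', n') - R (m', n') ∘ₗ R (a * m, a * n)
        = R (m + m', n + n') ∘ₗ R ((a - 1) * m, (a - 1) * n) := by
  intro a ha
  obtain ⟨b, rfl⟩ : ∃ b, a = b + 1 := ⟨a - 1, by omega⟩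
  simp only [Nat.add_sub_cancel]
  -- basic arithmetic facts
  have hd : m * n' = m' * n + 1 := by
    have h2 : m' * n ≤ m * n' := by
      by_contra hcon
      push_neg at hcon
      rw [Nat.sub_eq_zero_of_le hcon.le] at hdet
      exact one_ne_zero hdet.symm
    have := (Nat.sub_eq_iff_eq_add h2).mp hdet
    omega
  have hm : 1 ≤ m := by
    by_contra hcon
    push_neg at hcon
    interval_cases m
    simp at hd
  have hn' : 1 ≤ n' := by
    by_contra hcon
    push_neg at hcon
    interval_cases n'
    simp at hd
  have hR0 : R 0 = 1 := hR.trans Module.End.one_eq_id.symm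
  set a := b + 1 with hab
  set d : Fin 2 →₀ ℕ := fT2 (a * m + m') (a * n + n') with hdd
  have h := congrArg (MvPowerSeries.coeff (R := Module.End K V) d) h5
  simp only [MvPowerSeries.coeff_mul] at h
  -- LHS sum
  have hL : ∑ p ∈ Finset.HasAntidiagonal.antidiagonal d,
      (MvPowerSeries.coeff (R := Module.End K V) p.1) (fiveTermT R m n) *
        (MvPowerSeries.coeff (R := Module.End K V) p.2) (fiveTermT R m' n')
      = R (a * m, a * n) * R (m', n') := by
    rw [Finset.sum_eq_single_of_mem (⟨fT2 (a * m) (a * n), fT2 m' n'⟩ :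
        (Fin 2 →₀ ℕ) × (Fin 2 →₀ ℕ))]
    · rw [coeffT, coeffT, if_pos ⟨a, by simp [fT2_0, fT2_1, mul_comm]⟩,
        if_pos ⟨1, by simp [fT2_0, fT2_1]⟩]
      simp [fT2_0, fT2_1]
    · rw [Finset.HasAntidiagonal.mem_antidiagonal, fT2_add]
    · rintro ⟨p1, p2⟩ hp hne
      rw [Finset.HasAntidiagonal.mem_antidiagonal] at hp
      rw [coeffT, coeffT]
      split_ifs with h1 h2
      · exfalso
        obtain ⟨k, hk0, hk1⟩ := h1
        obtain ⟨j, hj0, hj1⟩ := h2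
        have e0 : p1 0 + p2 0 = a * m + m' := by
          rw [← Finsupp.add_apply, hp, hdd, fT2_0]
        have e1 : p1 1 + p2 1 = a * n + n' := by
          rw [← Finsupp.add_apply, hp, hdd, fT2_1]
        obtain ⟨hk, hj⟩ := unique_rep m n m' n' hd a k j
          (by rw [hk0, hj0] at e0; exact e0) (by rw [hk1, hj1] at e1; exact e1)
        apply hne
        subst hk hj
        have hp1 : p1 = fT2 (a * m) (a * n) :=
          fT2_ext (by rw [hk0, mul_comm]) (by rw [hk1, mul_comm])
        have hp2 : p2 = fT2 m' n' :=
          fT2_ext (by rw [hj0, mul_one]) (by rw [hj1, mul_one])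
        exact Prod.ext hp1 hp2
      all_goals simp
  -- RHS sum
  have hR1 : ∑ p ∈ Finset.HasAntidiagonal.antidiagonal d,
      (∑ q ∈ Finset.HasAntidiagonal.antidiagonal p.1,
        (MvPowerSeries.coeff (R := Module.End K V) q.1) (fiveTermT R m' n') *
          (MvPowerSeries.coeff (R := Module.End K V) q.2) (fiveTermT R (m + m') (n + n'))) *
        (MvPowerSeries.coeff (R := Module.End K V) p.2) (fiveTermT R m n)
      = R (m', n') * R (a * m, a * n) + R (m + m', n + n') * R (b * m, b * n) := by
    have hmem1 : (⟨fT2 m' n', fT2 (a * m) (a * n)⟩ : (Fin 2 →₀ ℕ) × (Fin 2 →₀ ℕ))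
        ∈ Finset.HasAntidiagonal.antidiagonal d := by
      rw [Finset.HasAntidiagonal.mem_antidiagonal, fT2_add, hdd]
      congr 1 <;> omega
    have hmem2 : (⟨fT2 (m + m') (n + n'), fT2 (b * m) (b * n)⟩ :
        (Fin 2 →₀ ℕ) × (Fin 2 →₀ ℕ)) ∈ Finset.HasAntidiagonal.antidiagonal d := by
      rw [Finset.HasAntidiagonal.mem_antidiagonal, fT2_add, hdd]
      congr 1 <;> (rw [hab]; ring)
    have hne12 : (⟨fT2 m' n', fT2 (a * m) (a * n)⟩ : (Fin 2 →₀ ℕ) × (Fin 2 →₀ ℕ))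
        ≠ ⟨fT2 (m + m') (n + n'), fT2 (b * m) (b * n)⟩ := by
      intro hcon
      have := congrArg (fun p => p.1 0) hcon
      simp only [fT2_0] at this
      omega
    rw [← Finset.add_sum_erase _ _ hmem1]
    -- value at P1
    have hv1 : (∑ q ∈ Finset.HasAntidiagonal.antidiagonal (fT2 m' n'),
        (MvPowerSeries.coeff (R := Module.End K V) q.1) (fiveTermT R m' n') *
          (MvPowerSeries.coeff (R := Module.End K V) q.2) (fiveTermT R (m + m') (n + n')))
        = R (m', n') := by
      rw [Finset.sum_eq_single_of_mem (⟨fT2 m' n', fT2 0 0⟩ :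
          (Fin 2 →₀ ℕ) × (Fin 2 →₀ ℕ))]
      · rw [coeffT, coeffT, if_pos ⟨1, by simp [fT2_0, fT2_1]⟩,
          if_pos ⟨0, by simp [fT2_0, fT2_1]⟩]
        simp [fT2_0, fT2_1, show R (0, 0) = 1 from hR0]
      · rw [Finset.HasAntidiagonal.mem_antidiagonal, fT2_add]
        simp
      · rintro ⟨q1, q2⟩ hq hne
        rw [Finset.HasAntidiagonal.mem_antidiagonal] at hq
        rw [coeffT, coeffT]
        split_ifs with h1 h2
        · exfalso
          obtain ⟨j, hj0, hj1⟩ := h1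
          obtain ⟨l, hl0, hl1⟩ := h2
          have e0 : m' * j + (m + m') * l = m' := by
            rw [← hj0, ← hl0, ← Finsupp.add_apply, hq, fT2_0]
          have e1 : n' * j + (n + n') * l = n' := by
            rw [← hj1, ← hl1, ← Finsupp.add_apply, hq, fT2_1]
          have hl : l = 0 := by
            by_contra hcon
            have h1' : m + m' ≤ (m + m') * l :=
              Nat.le_mul_of_pos_right _ (Nat.pos_of_ne_zero hcon)
            have h2' : (m + m') * l ≤ m' := le_of_le_of_eq (Nat.le_add_left _ _) e0
            have h3 := le_trans h1' h2'
            omega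
          subst hl
          simp only [mul_zero, add_zero] at e0 e1
          have hjv : j = 1 := by
            have := Nat.eq_of_mul_eq_mul_left (show 0 < n' by omega)
              (e1.trans (mul_one n').symm)
            exact this
          subst hjv
          apply hne
          refine Prod.ext (fT2_ext ?_ ?_) (fT2_ext ?_ ?_) <;> simp [hj0, hj1, hl0, hl1]
        all_goals simp
    -- value at P2
    have hv2 : (∑ q ∈ Finset.HasAntidiagonal.antidiagonal (fT2 (m + m') (n + n')),
        (MvPowerSeries.coeff (R := Module.End K V) q.1) (fiveTermT R m' n') *
          (MvPowerSeries.coeff (R := Module.End K V) q.2) (fiveTermT R (m + m') (n + n')))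
        = R (m + m', n + n') := by
      rw [Finset.sum_eq_single_of_mem (⟨fT2 0 0, fT2 (m + m') (n + n')⟩ :
          (Fin 2 →₀ ℕ) × (Fin 2 →₀ ℕ))]
      · rw [coeffT, coeffT, if_pos ⟨0, by simp [fT2_0, fT2_1]⟩,
          if_pos ⟨1, by simp [fT2_0, fT2_1]⟩]
        simp [fT2_0, fT2_1, show R (0, 0) = 1 from hR0]
      · rw [Finset.HasAntidiagonal.mem_antidiagonal, fT2_add]
        congr 1 <;> omega
      · rintro ⟨q1, q2⟩ hq hne
        rw [Finset.HasAntidiagonal.mem_antidiagonal] at hq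
        rw [coeffT, coeffT]
        split_ifs with h1 h2
        · exfalso
          obtain ⟨j, hj0, hj1⟩ := h1
          obtain ⟨l, hl0, hl1⟩ := h2
          have e0 : m' * j + (m + m') * l = m + m' := by
            rw [← hj0, ← hl0, ← Finsupp.add_apply, hq, fT2_0]
          have e1 : n' * j + (n + n') * l = n + n' := by
            rw [← hj1, ← hl1, ← Finsupp.add_apply, hq, fT2_1]
          -- l ≤ 1
          have hl2 : l ≤ 1 := by
            by_contra hcon
            push_neg at hcon
            have h1' : (m + m') * 2 ≤ (m + m') * l := Nat.mul_le_mul_left _ hcon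
            have h2' : (m + m') * l ≤ m + m' := le_of_le_of_eq (Nat.le_add_left _ _) e0
            have h3 := le_trans h1' h2'
            omega
          interval_cases l
          · -- l = 0 : m'*j = m+m', n'*j = n+n', contradicts determinant
            simp only [mul_zero, add_zero] at e0 e1
            have ecross : n' * (m + m') = m' * (n + n') := by
              calc n' * (m + m') = n' * (m' * j) := by rw [e0]
                _ = m' * (n' * j) := by ring
                _ = m' * (n + n') := by rw [e1]
            rw [Nat.mul_add, Nat.mul_add] at ecross
            have hx : n' * m = m * n' := Nat.mul_comm _ _
            have hy : n' * m' = m' * n' := Nat.mul_comm _ _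
            have hz : m' * n = m' * n := rfl
            linarith
          · -- l = 1 : j = 0, so q = q₂
            simp only [mul_one] at e0 e1
            have h0 : n' * j = 0 := by
              have := e1.trans (zero_add (n + n')).symm
              exact Nat.add_right_cancel this
            have hj : j = 0 := by
              rcases Nat.mul_eq_zero.mp h0 with h | h
              · omega
              · exact h
            subst hj
            apply hne
            refine Prod.ext (fT2_ext ?_ ?_) (fT2_ext ?_ ?_) <;>
              simp [hj0, hj1, hl0, hl1]
        all_goals simp
    rw [Finset.sum_eq_single_of_mem (⟨fT2 (m + m') (n + n'), fT2 (b * m) (b * n)⟩ :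
        (Fin 2 →₀ ℕ) × (Fin 2 →₀ ℕ)) (Finset.mem_erase.mpr ⟨Ne.symm hne12, hmem2⟩)]
    · rw [hv1, hv2]
      rw [coeffT, coeffT, if_pos ⟨a, by simp [fT2_0, fT2_1, mul_comm]⟩,
        if_pos ⟨b, by simp [fT2_0, fT2_1, mul_comm]⟩]
      simp [fT2_0, fT2_1]
    · rintro ⟨p1, p2⟩ hp hne
      rw [Finset.mem_erase, Finset.HasAntidiagonal.mem_antidiagonal] at hp
      obtain ⟨hne1, hp⟩ := hp
      rw [coeffT (R := R) (m := m) (n := n)]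
      split_ifs with hc
      · obtain ⟨k, hk0, hk1⟩ := hc
        rw [Finset.sum_eq_zero, zero_mul]
        rintro ⟨q1, q2⟩ hq
        rw [Finset.HasAntidiagonal.mem_antidiagonal] at hq
        rw [coeffT, coeffT]
        split_ifs with h1 h2
        · exfalso
          obtain ⟨j, hj0, hj1⟩ := h1
          obtain ⟨l, hl0, hl1⟩ := h2
          have e0 : m' * j + (m + m') * l + m * k = a * m + m' := by
            rw [← hj0, ← hl0, ← hk0, ← Finsupp.add_apply, hq, ← Finsupp.add_apply, hp,
              hdd, fT2_0]
          have e1 : n' * j + (n + n') * l + n * k = a * n + n' := by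
            rw [← hj1, ← hl1, ← hk1, ← Finsupp.add_apply, hq, ← Finsupp.add_apply, hp,
              hdd, fT2_1]
          obtain ⟨hK, hJ⟩ := unique_rep m n m' n' hd a (k + l) (j + l)
            (by rw [← e0]; ring) (by rw [← e1]; ring)
          -- j + l = 1
          have hlcases : l = 0 ∨ l = 1 := by omega
          rcases hlcases with rfl | rfl
          · -- l = 0 : k = a, j = 1 : p = P1, contradiction with hne1
            have hk' : k = a := by omega
            have hj' : j = 1 := by omega
            subst hk' hj'
            apply hne1
            refine Prod.ext (fT2_ext ?_ ?_) (fT2_ext ?_ ?_)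
            · rw [show p1 = q1 + q2 from hq.symm, Finsupp.add_apply, hj0, hl0]
              simp
            · rw [show p1 = q1 + q2 from hq.symm, Finsupp.add_apply, hj1, hl1]
              simp
            · rw [hk0, mul_comm]
            · rw [hk1, mul_comm]
          · -- l = 1 : k = b, j = 0 : p = P2, contradiction with hne
            have hk' : k = b := by omega
            have hj' : j = 0 := by omega
            subst hk' hj'
            apply hne
            refine Prod.ext (fT2_ext ?_ ?_) (fT2_ext ?_ ?_)
            · rw [show p1 = q1 + q2 from hq.symm, Finsupp.add_apply, hj0, hl0]
              simp
            · rw [show p1 = q1 + q2 from hq.symm, Finsupp.add_apply, hj1, hl1]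
              simp
            · rw [hk0, mul_comm]
            · rw [hk1, mul_comm]
        all_goals simp
      · rw [mul_zero]
  rw [hL, hR1] at h
  have goal' : R (a * m, a * n) * R (m', n') - R (m', n') * R (a * m, a * n)
      = R (m + m', n + n') * R (b * m, b * n) := by
    rw [h, add_sub_cancel_left]
  simpa [Module.End.mul_eq_comp] using goal'
end

section
/- Suppose the family R satisfies the five-term relations: for all natural numbers m, n, m', n' with m·n' − m'·n = 1, T_{m,n} T_{m',n'} = T_{m',n'} T_{m+m',n+n'} T_{m,n} holds in End_K(V)[[u,v]]. Then for every pair of natural numbers (m,n), the operator R(m,n) belongs to the K-subalgebra of End_K(V) generated by the set {R(k,0) : k ≥ 1} ∪ {R(0,k) : k ≥ 1}. -/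
open Classical

section AuxLemmas

variable {K V : Type*} [Field K] [AddCommGroup V] [Module K V]

lemma fiveTermT_coeff (R : ℕ × ℕ → Module.End K V) (x y : ℕ) (d : Fin 2 →₀ ℕ) :
    MvPowerSeries.coeff d (fiveTermT R x y) =
      if ∃ k : ℕ, d 0 = x * k ∧ d 1 = y * k then R (d 0, d 1) else 0 := rfl

lemma finsupp2_eq_zero {f : Fin 2 →₀ ℕ} (h : f 0 + f 1 = 0) : f = 0 := by
  have h0 : f 0 = 0 := by omega
  have h1 : f 1 = 0 := by omega
  ext x
  fin_cases x
  · simpa using h0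
  · simpa using h1

lemma stern_parents (p q : ℕ) (hp : 1 ≤ p) (hq : 1 ≤ q) (hpq : Nat.Coprime p q) :
    ∃ a b a' b' : ℕ, a * b' = a' * b + 1 ∧ a + a' = p ∧ b + b' = q := by
  rcases eq_or_lt_of_le hq with hq1 | hq2
  · exact ⟨1, 0, p - 1, 1, by simp, by omega, by omega⟩
  · obtain ⟨x, -, hx⟩ := Nat.exists_mul_mod_eq_one_of_coprime hpq hq2
    have hb'lt : x % q < q := Nat.mod_lt _ (by omega)
    have hmod : p * (x % q) % q = 1 := by
      have h1 : p * (x % q) ≡ p * x [MOD q] := (Nat.mod_modEq x q).mul_left p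
      have h2 : p * (x % q) % q = p * x % q := h1
      rw [h2, hx]
    have hb'pos : 1 ≤ x % q := by
      rcases Nat.eq_zero_or_pos (x % q) with h | h
      · rw [h, Nat.mul_zero] at hmod; simp at hmod
      · exact h
    have hkey : q * (p * (x % q) / q) + 1 = p * (x % q) := by
      conv_rhs => rw [← Nat.div_add_mod (p * (x % q)) q]
      rw [hmod]
    have ha'lt : p * (x % q) / q < p := by
      have h4 : p * (x % q) ≤ p * q := Nat.mul_le_mul_left p (le_of_lt hb'lt)
      have h3 : q * (p * (x % q) / q) < q * p := by
        calc q * (p * (x % q) / q) < q * (p * (x % q) / q) + 1 := Nat.lt_succ_self _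
          _ = p * (x % q) := hkey
          _ ≤ p * q := h4
          _ = q * p := Nat.mul_comm p q
      exact Nat.lt_of_mul_lt_mul_left h3
    refine ⟨p - p * (x % q) / q, q - x % q, p * (x % q) / q, x % q, ?_, by omega, by omega⟩
    have e1 : (p - p * (x % q) / q) * (x % q) + (p * (x % q) / q) * (x % q) = p * (x % q) := by
      rw [← Nat.add_mul, Nat.sub_add_cancel (le_of_lt ha'lt)]
    have e2 : (p * (x % q) / q) * (q - x % q) + (p * (x % q) / q) * (x % q)
        = (p * (x % q) / q) * q := by
      rw [← Nat.mul_add, Nat.sub_add_cancel (le_of_lt hb'lt)]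
    have e3 : p * (x % q) = (p * (x % q) / q) * q + 1 := by linarith [hkey]
    have e4 : (p - p * (x % q) / q) * (x % q) + (p * (x % q) / q) * (x % q)
        = ((p * (x % q) / q) * (q - x % q) + 1) + (p * (x % q) / q) * (x % q) := by
      linarith [e1, e2, e3]
    exact Nat.add_right_cancel e4

end AuxLemmas

theorem stmt_6 {K V : Type*} [Field K] [AddCommGroup V] [Module K V]
    (R : ℕ × ℕ → Module.End K V) (hR : R (0, 0) = LinearMap.id)
    (h5 : ∀ m n m' n' : ℕ, m * n' - m' * n = 1 →
        fiveTermT R m n * fiveTermT R m' n'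
          = fiveTermT R m' n' * fiveTermT R (m + m') (n + n') * fiveTermT R m n) :
    ∀ m n : ℕ,
      R (m, n) ∈ Algebra.adjoin K
        ({x : Module.End K V | ∃ k : ℕ, 1 ≤ k ∧ x = R (k, 0)}
          ∪ {x : Module.End K V | ∃ k : ℕ, 1 ≤ k ∧ x = R (0, k)}) := by
  suffices h : ∀ N m n : ℕ, m + n ≤ N →
      R (m, n) ∈ Algebra.adjoin K
        ({x : Module.End K V | ∃ k : ℕ, 1 ≤ k ∧ x = R (k, 0)}
          ∪ {x : Module.End K V | ∃ k : ℕ, 1 ≤ k ∧ x = R (0, k)}) by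
    intro m n
    exact h (m + n) m n le_rfl
  set A := Algebra.adjoin K
        ({x : Module.End K V | ∃ k : ℕ, 1 ≤ k ∧ x = R (k, 0)}
          ∪ {x : Module.End K V | ∃ k : ℕ, 1 ≤ k ∧ x = R (0, k)}) with hAdef
  have hA0 : R (0, 0) ∈ A := by
    rw [hR, ← Module.End.one_eq_id]
    exact one_mem A
  have hAx : ∀ k : ℕ, R (k, 0) ∈ A := by
    intro k
    rcases Nat.eq_zero_or_pos k with h | h
    · rw [h]; exact hA0
    · exact Algebra.subset_adjoin (Set.mem_union_left _ ⟨k, h, rfl⟩)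
  have hAy : ∀ k : ℕ, R (0, k) ∈ A := by
    intro k
    rcases Nat.eq_zero_or_pos k with h | h
    · rw [h]; exact hA0
    · exact Algebra.subset_adjoin (Set.mem_union_right _ ⟨k, h, rfl⟩)
  intro N
  induction N with
  | zero =>
    intro m n h
    have hm : m = 0 := by omega
    have hn : n = 0 := by omega
    rw [hm, hn]; exact hA0
  | succ N IH =>
    intro m n hmn
    rcases Nat.eq_zero_or_pos m with hm0 | hm1
    · rw [hm0]; exact hAy n
    rcases Nat.eq_zero_or_pos n with hn0 | hn1
    · rw [hn0]; exact hAx m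
    -- generic membership lemma for coefficients of a product of two series
    have Lsum : ∀ (x y x' y' : ℕ) (e : Fin 2 →₀ ℕ),
        (∀ u w : ℕ, u + w ≤ e 0 + e 1 → R (u, w) ∈ A) →
        MvPowerSeries.coeff e (fiveTermT R x y * fiveTermT R x' y') ∈ A := by
      intro x y x' y' e he
      rw [MvPowerSeries.coeff_mul]
      refine Subalgebra.sum_mem A ?_
      intro pr hpr
      rw [Finset.HasAntidiagonal.mem_antidiagonal] at hpr
      have e0 : pr.1 0 + pr.2 0 = e 0 := by rw [← hpr, Finsupp.add_apply]
      have e1 : pr.1 1 + pr.2 1 = e 1 := by rw [← hpr, Finsupp.add_apply]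
      rw [fiveTermT_coeff, fiveTermT_coeff]
      split_ifs
      · exact mul_mem (he _ _ (by omega)) (he _ _ (by omega))
      · rw [mul_zero]; exact zero_mem A
      · rw [zero_mul]; exact zero_mem A
      · rw [zero_mul]; exact zero_mem A
    -- gcd decomposition
    obtain ⟨t, p, q, htpos, hm, hn, hcop⟩ :
        ∃ t p q : ℕ, 0 < t ∧ t * p = m ∧ t * q = n ∧ Nat.Coprime p q := by
      refine ⟨Nat.gcd m n, m / Nat.gcd m n, n / Nat.gcd m n, ?_, ?_, ?_, ?_⟩
      · exact Nat.gcd_pos_of_pos_left n hm1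
      · exact Nat.mul_div_cancel' (Nat.gcd_dvd_left m n)
      · exact Nat.mul_div_cancel' (Nat.gcd_dvd_right m n)
      · exact Nat.coprime_div_gcd_div_gcd (Nat.gcd_pos_of_pos_left n hm1)
    have hp1 : 1 ≤ p := by
      rcases Nat.eq_zero_or_pos p with h | h
      · rw [h, Nat.mul_zero] at hm; omega
      · exact h
    have hq1 : 1 ≤ q := by
      rcases Nat.eq_zero_or_pos q with h | h
      · rw [h, Nat.mul_zero] at hn; omega
      · exact h
    obtain ⟨a, b, a', b', hdet, hap, hbq⟩ := stern_parents p q hp1 hq1 hcop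
    have haq : a * q = b * p + 1 := by
      calc a * q = a * (b + b') := by rw [hbq]
        _ = a * b' + a * b := by ring
        _ = (a' * b + 1) + a * b := by rw [hdet]
        _ = b * (a + a') + 1 := by ring
        _ = b * p + 1 := by rw [hap]
    have hb'p : b' * p = a' * q + 1 := by
      calc b' * p = b' * (a + a') := by rw [hap]
        _ = a * b' + a' * b' := by ring
        _ = (a' * b + 1) + a' * b' := by rw [hdet]
        _ = a' * (b + b') + 1 := by ring
        _ = a' * q + 1 := by rw [hbq]
    have hmq : m * q = n * p := by rw [← hm, ← hn]; ring
    have noAB : ∀ i : ℕ, a * i = m → b * i = n → False := by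
      intro i h1 h2
      have c1 : m * q = n * p + i := by
        calc m * q = (a * i) * q := by rw [h1]
          _ = (a * q) * i := by ring
          _ = (b * p + 1) * i := by rw [haq]
          _ = (b * i) * p + i := by ring
          _ = n * p + i := by rw [h2]
      rw [hmq] at c1
      have hi : i = 0 := by
        have h3 : n * p + 0 = n * p + i := by rw [Nat.add_zero]; exact c1
        exact (Nat.add_left_cancel h3).symm
      rw [hi, Nat.mul_zero] at h1
      omega
    have noA'B' : ∀ j : ℕ, a' * j = m → b' * j = n → False := by
      intro j h1 h2
      have c1 : n * p = m * q + j := by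
        calc n * p = (b' * j) * p := by rw [h2]
          _ = (b' * p) * j := by ring
          _ = (a' * q + 1) * j := by rw [hb'p]
          _ = (a' * j) * q + j := by ring
          _ = m * q + j := by rw [h1]
      rw [hmq] at c1
      have hj : j = 0 := by
        have h3 : n * p + 0 = n * p + j := by rw [Nat.add_zero]; exact c1
        exact (Nat.add_left_cancel h3).symm
      rw [hj, Nat.mul_zero] at h1
      omega
    -- the exponent point
    obtain ⟨D, hD0, hD1⟩ : ∃ D : Fin 2 →₀ ℕ, D 0 = m ∧ D 1 = n :=
      ⟨Finsupp.single 0 m + Finsupp.single 1 n, by simp [Finsupp.single_apply],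
        by simp [Finsupp.single_apply]⟩
    have hone : ∀ x y : ℕ,
        MvPowerSeries.coeff 0 (fiveTermT R x y) = 1 := by
      intro x y
      rw [fiveTermT_coeff]
      rw [if_pos (show ∃ k : ℕ, (0 : Fin 2 →₀ ℕ) 0 = x * k ∧ (0 : Fin 2 →₀ ℕ) 1 = y * k from
        ⟨0, by simp⟩)]
      simp only [Finsupp.coe_zero, Pi.zero_apply]
      rw [hR]
      exact Module.End.one_eq_id.symm
    have hcpq : MvPowerSeries.coeff D (fiveTermT R p q) = R (m, n) := by
      rw [fiveTermT_coeff]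
      rw [if_pos (show ∃ k : ℕ, D 0 = p * k ∧ D 1 = q * k from
        ⟨t, by rw [hD0, ← hm]; ring, by rw [hD1, ← hn]; ring⟩)]
      rw [hD0, hD1]
    have hmemD0 : ((D, (0 : Fin 2 →₀ ℕ))) ∈ Finset.HasAntidiagonal.antidiagonal D := by
      rw [Finset.HasAntidiagonal.mem_antidiagonal]; exact add_zero D
    have hmem0D : (((0 : Fin 2 →₀ ℕ), D)) ∈ Finset.HasAntidiagonal.antidiagonal D := by
      rw [Finset.HasAntidiagonal.mem_antidiagonal]; exact zero_add D
    have hstep : MvPowerSeries.coeff D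
          (fiveTermT R a' b' * fiveTermT R p q * fiveTermT R a b)
        = R (m, n)
          + (∑ qr ∈ (Finset.HasAntidiagonal.antidiagonal D).erase ((0 : Fin 2 →₀ ℕ), D),
              MvPowerSeries.coeff qr.1 (fiveTermT R a' b')
                * MvPowerSeries.coeff qr.2 (fiveTermT R p q))
          + ∑ pr ∈ (Finset.HasAntidiagonal.antidiagonal D).erase (D, (0 : Fin 2 →₀ ℕ)),
              MvPowerSeries.coeff pr.1 (fiveTermT R a' b' * fiveTermT R p q)
                * MvPowerSeries.coeff pr.2 (fiveTermT R a b) := by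
      calc MvPowerSeries.coeff D
            (fiveTermT R a' b' * fiveTermT R p q * fiveTermT R a b)
          = ∑ pr ∈ Finset.HasAntidiagonal.antidiagonal D,
              MvPowerSeries.coeff pr.1 (fiveTermT R a' b' * fiveTermT R p q)
                * MvPowerSeries.coeff pr.2 (fiveTermT R a b) :=
            MvPowerSeries.coeff_mul _ _ _
        _ = MvPowerSeries.coeff D (fiveTermT R a' b' * fiveTermT R p q)
              * MvPowerSeries.coeff 0 (fiveTermT R a b)
            + ∑ pr ∈ (Finset.HasAntidiagonal.antidiagonal D).erase (D, (0 : Fin 2 →₀ ℕ)),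
              MvPowerSeries.coeff pr.1 (fiveTermT R a' b' * fiveTermT R p q)
                * MvPowerSeries.coeff pr.2 (fiveTermT R a b) :=
            (Finset.add_sum_erase _ _ hmemD0).symm
        _ = (∑ qr ∈ Finset.HasAntidiagonal.antidiagonal D,
              MvPowerSeries.coeff qr.1 (fiveTermT R a' b')
                * MvPowerSeries.coeff qr.2 (fiveTermT R p q))
              * MvPowerSeries.coeff 0 (fiveTermT R a b)
            + ∑ pr ∈ (Finset.HasAntidiagonal.antidiagonal D).erase (D, (0 : Fin 2 →₀ ℕ)),
              MvPowerSeries.coeff pr.1 (fiveTermT R a' b' * fiveTermT R p q)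
                * MvPowerSeries.coeff pr.2 (fiveTermT R a b) := by
            rw [MvPowerSeries.coeff_mul]
        _ = (MvPowerSeries.coeff 0 (fiveTermT R a' b')
              * MvPowerSeries.coeff D (fiveTermT R p q)
            + ∑ qr ∈ (Finset.HasAntidiagonal.antidiagonal D).erase ((0 : Fin 2 →₀ ℕ), D),
              MvPowerSeries.coeff qr.1 (fiveTermT R a' b')
                * MvPowerSeries.coeff qr.2 (fiveTermT R p q))
              * MvPowerSeries.coeff 0 (fiveTermT R a b)
            + ∑ pr ∈ (Finset.HasAntidiagonal.antidiagonal D).erase (D, (0 : Fin 2 →₀ ℕ)),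
              MvPowerSeries.coeff pr.1 (fiveTermT R a' b' * fiveTermT R p q)
                * MvPowerSeries.coeff pr.2 (fiveTermT R a b) := by
            rw [← Finset.add_sum_erase _ _ hmem0D]
        _ = (1 * R (m, n)
            + ∑ qr ∈ (Finset.HasAntidiagonal.antidiagonal D).erase ((0 : Fin 2 →₀ ℕ), D),
              MvPowerSeries.coeff qr.1 (fiveTermT R a' b')
                * MvPowerSeries.coeff qr.2 (fiveTermT R p q)) * 1
            + ∑ pr ∈ (Finset.HasAntidiagonal.antidiagonal D).erase (D, (0 : Fin 2 →₀ ℕ)),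
              MvPowerSeries.coeff pr.1 (fiveTermT R a' b' * fiveTermT R p q)
                * MvPowerSeries.coeff pr.2 (fiveTermT R a b) := by
            rw [hone a' b', hone a b, hcpq]
        _ = R (m, n)
          + (∑ qr ∈ (Finset.HasAntidiagonal.antidiagonal D).erase ((0 : Fin 2 →₀ ℕ), D),
              MvPowerSeries.coeff qr.1 (fiveTermT R a' b')
                * MvPowerSeries.coeff qr.2 (fiveTermT R p q))
          + ∑ pr ∈ (Finset.HasAntidiagonal.antidiagonal D).erase (D, (0 : Fin 2 →₀ ℕ)),
              MvPowerSeries.coeff pr.1 (fiveTermT R a' b' * fiveTermT R p q)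
                * MvPowerSeries.coeff pr.2 (fiveTermT R a b) := by
            rw [one_mul, mul_one]
    have hLmem : MvPowerSeries.coeff D
        (fiveTermT R a b * fiveTermT R a' b') ∈ A := by
      rw [MvPowerSeries.coeff_mul]
      refine Subalgebra.sum_mem A ?_
      intro pr hpr
      rw [Finset.HasAntidiagonal.mem_antidiagonal] at hpr
      have e0 : pr.1 0 + pr.2 0 = m := by rw [← hD0, ← hpr, Finsupp.add_apply]
      have e1 : pr.1 1 + pr.2 1 = n := by rw [← hD1, ← hpr, Finsupp.add_apply]
      rw [fiveTermT_coeff, fiveTermT_coeff]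
      split_ifs with h1 h2 h3
      · obtain ⟨i, hi0, hi1⟩ := h1
        obtain ⟨j, hj0, hj1⟩ := h2
        have hb1 : pr.1 0 + pr.1 1 ≤ N := by
          by_cases hz : pr.1 0 + pr.1 1 = m + n
          · exfalso
            exact noAB i (by rw [← hi0]; omega) (by rw [← hi1]; omega)
          · omega
        have hb2 : pr.2 0 + pr.2 1 ≤ N := by
          by_cases hz : pr.2 0 + pr.2 1 = m + n
          · exfalso
            exact noA'B' j (by rw [← hj0]; omega) (by rw [← hj1]; omega)
          · omega
        exact mul_mem (IH _ _ hb1) (IH _ _ hb2)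
      · rw [mul_zero]; exact zero_mem A
      · rw [zero_mul]; exact zero_mem A
      · rw [zero_mul]; exact zero_mem A
    have hS1 : (∑ qr ∈ (Finset.HasAntidiagonal.antidiagonal D).erase ((0 : Fin 2 →₀ ℕ), D),
        MvPowerSeries.coeff qr.1 (fiveTermT R a' b')
          * MvPowerSeries.coeff qr.2 (fiveTermT R p q)) ∈ A := by
      refine Subalgebra.sum_mem A ?_
      intro qr hqr
      obtain ⟨hne, hqr⟩ := Finset.mem_erase.mp hqr
      rw [Finset.HasAntidiagonal.mem_antidiagonal] at hqr
      have e0 : qr.1 0 + qr.2 0 = m := by rw [← hD0, ← hqr, Finsupp.add_apply]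
      have e1 : qr.1 1 + qr.2 1 = n := by rw [← hD1, ← hqr, Finsupp.add_apply]
      rw [fiveTermT_coeff, fiveTermT_coeff]
      split_ifs with h1 h2 h3
      · obtain ⟨j, hj0, hj1⟩ := h1
        obtain ⟨c, hc0, hc1⟩ := h2
        have hb1 : qr.1 0 + qr.1 1 ≤ N := by
          by_cases hz : qr.1 0 + qr.1 1 = m + n
          · exfalso
            exact noA'B' j (by rw [← hj0]; omega) (by rw [← hj1]; omega)
          · omega
        have hb2 : qr.2 0 + qr.2 1 ≤ N := by
          by_cases hz : qr.2 0 + qr.2 1 = m + n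
          · exfalso
            apply hne
            have hq1z : qr.1 = 0 := finsupp2_eq_zero (by omega)
            have hq2 : qr.2 = D := by rw [← hqr, hq1z, zero_add]
            exact Prod.ext hq1z hq2
          · omega
        exact mul_mem (IH _ _ hb1) (IH _ _ hb2)
      · rw [mul_zero]; exact zero_mem A
      · rw [zero_mul]; exact zero_mem A
      · rw [zero_mul]; exact zero_mem A
    have hS2 : (∑ pr ∈ (Finset.HasAntidiagonal.antidiagonal D).erase (D, (0 : Fin 2 →₀ ℕ)),
        MvPowerSeries.coeff pr.1 (fiveTermT R a' b' * fiveTermT R p q)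
          * MvPowerSeries.coeff pr.2 (fiveTermT R a b)) ∈ A := by
      refine Subalgebra.sum_mem A ?_
      intro pr hpr
      obtain ⟨hne, hpr⟩ := Finset.mem_erase.mp hpr
      rw [Finset.HasAntidiagonal.mem_antidiagonal] at hpr
      have e0 : pr.1 0 + pr.2 0 = m := by rw [← hD0, ← hpr, Finsupp.add_apply]
      have e1 : pr.1 1 + pr.2 1 = n := by rw [← hD1, ← hpr, Finsupp.add_apply]
      rw [fiveTermT_coeff R a b]
      split_ifs with h1
      · obtain ⟨i, hi0, hi1⟩ := h1
        have hb2 : pr.2 0 + pr.2 1 ≤ N := by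
          by_cases hz : pr.2 0 + pr.2 1 = m + n
          · exfalso
            exact noAB i (by rw [← hi0]; omega) (by rw [← hi1]; omega)
          · omega
        have hpos : 1 ≤ pr.2 0 + pr.2 1 := by
          by_contra hc
          push_neg at hc
          apply hne
          have h2z : pr.2 = 0 := finsupp2_eq_zero (by omega)
          have h1D : pr.1 = D := by rw [← hpr, h2z, add_zero]
          exact Prod.ext h1D h2z
        refine mul_mem (Lsum a' b' p q pr.1 ?_) (IH _ _ hb2)
        intro u w huw
        exact IH u w (by omega)
      · rw [mul_zero]; exact zero_mem A
    have h5' := h5 a b a' b' (Nat.sub_eq_of_eq_add (by rw [hdet, Nat.add_comm]))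
    rw [hap, hbq] at h5'
    have heq : MvPowerSeries.coeff D (fiveTermT R a b * fiveTermT R a' b')
        = MvPowerSeries.coeff D
            (fiveTermT R a' b' * fiveTermT R p q * fiveTermT R a b) := by
      rw [h5']
    have hfin : R (m, n)
        = MvPowerSeries.coeff D (fiveTermT R a b * fiveTermT R a' b')
          - ((∑ qr ∈ (Finset.HasAntidiagonal.antidiagonal D).erase ((0 : Fin 2 →₀ ℕ), D),
              MvPowerSeries.coeff qr.1 (fiveTermT R a' b')
                * MvPowerSeries.coeff qr.2 (fiveTermT R p q))
            + ∑ pr ∈ (Finset.HasAntidiagonal.antidiagonal D).erase (D, (0 : Fin 2 →₀ ℕ)),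
              MvPowerSeries.coeff pr.1 (fiveTermT R a' b' * fiveTermT R p q)
                * MvPowerSeries.coeff pr.2 (fiveTermT R a b)) := by
      rw [heq, hstep]
      abel
    rw [hfin]
    exact sub_mem hLmem (add_mem hS1 hS2)
end
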